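/- If the minimum A–B edge cut σ_min of the connected graph Γ is unique, then the maximizer of the face number Ω̃({π_v}) = ∑_{(u,v)∈E} χ(π_u⁻¹ π_v) subject to the boundary conditions (id on the A side, N-cycle F on the B side) is unique, given by assigning id and F to the two components of Γ ∖ σ_min. -/

import Mathlib

def numCycles {N : ℕ} (π : Equiv.Perm (Fin N)) : ℕ :=
  N - π.cycleType.sum + Multiset.card π.cycleType


/-- The face count `χ(π_u⁻¹ π_v)` of an unordered edge `{u, v}`. -/
def numCyclesLift {N : ℕ} {V : Type*} (π : V → Equiv.Perm (Fin N)) : Sym2 V → ℕ :=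
  Sym2.lift ⟨fun u v => numCycles ((π u)⁻¹ * π v), fun u v => by
    have h : (π v)⁻¹ * π u = ((π u)⁻¹ * π v)⁻¹ := by group
    show numCycles ((π u)⁻¹ * π v) = numCycles ((π v)⁻¹ * π u)
    rw [numCycles, numCycles, h, Equiv.Perm.cycleType_inv]⟩

/-- `σ` is an `A`–`B` edge cut: a set of edges of `G` such that every walk from
`A` to `B` uses an edge of `σ`. -/
def IsEdgeCut {V : Type*} (G : SimpleGraph V) (A B : Set V)
    (σ : Finset (Sym2 V)) : Prop :=
  ↑σ ⊆ G.edgeSet ∧ ∀ a ∈ A, ∀ b ∈ B, ∀ w : G.Walk a b, ∃ e ∈ w.edges, e ∈ σ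

/-- `σ` is a minimum `A`–`B` edge cut. -/
def IsMinEdgeCut {V : Type*} (G : SimpleGraph V) (A B : Set V)
    (σ : Finset (Sym2 V)) : Prop :=
  IsEdgeCut G A B σ ∧ ∀ σ' : Finset (Sym2 V), IsEdgeCut G A B σ' → σ.card ≤ σ'.card

open scoped Classical in
/-- The labeling assigning `id` to vertices reachable from `A` after deleting the
cut edges `σ`, and `F` to all other vertices. -/
noncomputable def cutLabel {V : Type*} {N : ℕ} (G : SimpleGraph V)
    (σ : Finset (Sym2 V)) (A : Set V) (F : Equiv.Perm (Fin N)) :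
    V → Equiv.Perm (Fin N) :=
  fun v => if ∃ a ∈ A, (G.deleteEdges ↑σ).Reachable a v then 1 else F

open Equiv Equiv.Perm Module LinearMap


section PermDefect

variable {N : ℕ}

noncomputable def Dop (g : Perm (Fin N)) : (Fin N → ℚ) →ₗ[ℚ] (Fin N → ℚ) :=
  LinearMap.funLeft ℚ ℚ g - LinearMap.id

noncomputable def defect (g : Perm (Fin N)) : ℕ :=
  finrank ℚ (LinearMap.range (Dop g))

lemma mem_ker_Dop {g : Perm (Fin N)} {f : Fin N → ℚ} :
    f ∈ ker (Dop g) ↔ ∀ x, f (g x) = f x := by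
  simp only [Dop, mem_ker, LinearMap.sub_apply, funLeft_apply, id_apply, sub_eq_zero, funext_iff]

lemma ker_const {g : Perm (Fin N)} {f : Fin N → ℚ} (hf : f ∈ ker (Dop g))
    {x y : Fin N} (h : g.SameCycle x y) : f x = f y := by
  obtain ⟨i, rfl⟩ := h
  rw [mem_ker_Dop] at hf
  have hinv : ∀ x, f (g⁻¹ x) = f x := fun x => by
    conv_rhs => rw [← (show g (g⁻¹ x) = x by simp), hf]
  induction i using Int.induction_on with
  | zero => simp
  | succ k ih => rw [add_comm, zpow_add, zpow_one, Equiv.Perm.mul_apply, hf]; exact ih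
  | pred k ih =>
      rw [sub_eq_add_neg, add_comm, zpow_add, zpow_neg_one, Equiv.Perm.mul_apply, hinv]
      exact ih

noncomputable def kerEquiv (g : Perm (Fin N)) :
    ker (Dop g) ≃ₗ[ℚ] (Quotient (Equiv.Perm.SameCycle.setoid g) → ℚ) where
  toFun f := Quotient.lift f.1 (fun _ _ h => ker_const f.2 h)
  map_add' f g := by ext ⟨x⟩; rfl
  map_smul' c f := by ext ⟨x⟩; rfl
  invFun h := ⟨fun x => h ⟦x⟧, by
    rw [mem_ker_Dop]
    intro x
    exact congrArg h (Quotient.sound (⟨-1, by simp⟩ : g.SameCycle (g x) x))⟩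
  left_inv f := rfl
  right_inv h := by ext ⟨x⟩; rfl

lemma card_quot (g : Perm (Fin N)) :
    Nat.card (Quotient (Equiv.Perm.SameCycle.setoid g)) = numCycles g := by
  classical
  have e : Quotient (Equiv.Perm.SameCycle.setoid g) ≃
      ({x : Fin N // g x = x} ⊕ {c // c ∈ g.cycleFactorsFinset}) := by
    refine
      { toFun := Quotient.lift (fun x =>
          if h : g x = x then Sum.inl ⟨x, h⟩ else
            Sum.inr ⟨g.cycleOf x, cycleOf_mem_cycleFactorsFinset_iff.2 (mem_support.2 h)⟩) ?_
        invFun := Sum.elim (fun x => ⟦x.1⟧)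
          (fun c => ⟦c.1.support.min' (Finset.card_pos.1
            (lt_of_lt_of_le two_pos (mem_cycleFactorsFinset_iff.1 c.2).1.two_le_card_support))⟧)
        left_inv := ?_
        right_inv := ?_ }
    · -- well-defined
      intro x y (hxy : g.SameCycle x y)
      by_cases hx : g x = x
      · have : x = y := hxy.eq_of_left hx
        subst this; rfl
      · have hy : ¬ g y = y := fun hy => hx (hxy.apply_eq_self_iff.2 hy)
        simp only [dif_neg hx, dif_neg hy]
        simp only [Sum.inr.injEq, Subtype.mk.injEq]
        exact hxy.cycleOf_eq
    · -- left inverse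
      refine Quotient.ind (fun x => ?_)
      by_cases hx : g x = x
      · simp only [Quotient.lift_mk, dif_pos hx, Sum.elim_inl]
      · simp only [Quotient.lift_mk, dif_neg hx, Sum.elim_inr]
        refine Quotient.sound ?_
        have hmem := ( (g.cycleOf x).support.min'_mem (Finset.card_pos.1
            (lt_of_lt_of_le two_pos (mem_cycleFactorsFinset_iff.1
              (cycleOf_mem_cycleFactorsFinset_iff.2 (mem_support.2 hx))).1.two_le_card_support)))
        have := (mem_support_cycleOf_iff (f := g) (x := x)).1 hmem
        exact (this.1).symm
    · -- right inverse
      rintro (⟨x, hx⟩ | ⟨c, hc⟩)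
      · simp only [Sum.elim_inl, Quotient.lift_mk, dif_pos hx]
      · simp only [Sum.elim_inr]
        set m := c.support.min' _ with hm
        have hmem : m ∈ c.support := c.support.min'_mem _
        have hceq : c = g.cycleOf m := cycle_is_cycleOf hmem hc
        have hgm : ¬ g m = m := by
          have := (mem_cycleFactorsFinset_iff.1 hc).2 m hmem
          have hcm : c m ≠ m := mem_support.1 hmem
          rw [this] at hcm; exact hcm
        simp only [Quotient.lift_mk, dif_neg hgm, Sum.inr.injEq, Subtype.mk.injEq]
        exact hceq.symm
  rw [Nat.card_congr e, Nat.card_sum]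
  have h1 : Nat.card {x : Fin N // g x = x} = N - g.support.card := by
    rw [Nat.card_eq_fintype_card, Fintype.card_subtype]
    have : (Finset.univ.filter (fun x => g x = x)) = g.supportᶜ := by
      ext x; simp [Equiv.Perm.mem_support]
    rw [this, Finset.card_compl, Fintype.card_fin]
  have h2 : Nat.card {c // c ∈ g.cycleFactorsFinset} = Multiset.card g.cycleType := by
    rw [Nat.card_eq_fintype_card, Fintype.card_coe, cycleType_def, Multiset.card_map]
    rfl
  rw [h1, h2, numCycles, sum_cycleType]

end PermDefect

section PermDefect2
variable {N : ℕ}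

lemma numCycles_add_defect (g : Perm (Fin N)) : numCycles g + defect g = N := by
  classical
  have hker : finrank ℚ (ker (Dop g)) = numCycles g := by
    rw [(kerEquiv g).finrank_eq]
    letI : Fintype (Quotient (Equiv.Perm.SameCycle.setoid g)) := Fintype.ofFinite _
    rw [Module.finrank_fintype_fun_eq_card, ← Nat.card_eq_fintype_card, card_quot]
  have := LinearMap.finrank_range_add_finrank_ker (Dop g)
  rw [hker, Module.finrank_fintype_fun_eq_card, Fintype.card_fin] at this
  unfold defect
  omega

lemma numCycles_le (g : Perm (Fin N)) : numCycles g ≤ N := by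
  have := numCycles_add_defect g; omega

lemma defect_eq (g : Perm (Fin N)) : defect g = N - numCycles g := by
  have := numCycles_add_defect g; omega

lemma numCycles_one : numCycles (1 : Perm (Fin N)) = N := by
  simp [numCycles]

lemma numCycles_pos (hN : 1 ≤ N) (g : Perm (Fin N)) : 1 ≤ numCycles g := by
  rcases eq_or_ne g 1 with rfl | hg
  · rw [numCycles_one]; exact hN
  · have := card_cycleType_pos.2 hg
    unfold numCycles; omega

lemma defect_le (hN : 1 ≤ N) (g : Perm (Fin N)) : defect g ≤ N - 1 := by
  have h1 := numCycles_add_defect g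
  have h2 := numCycles_pos hN g
  omega

lemma defect_one : defect (1 : Perm (Fin N)) = 0 := by
  have := numCycles_add_defect (1 : Perm (Fin N))
  rw [numCycles_one] at this; omega

lemma numCycles_inv (g : Perm (Fin N)) : numCycles g⁻¹ = numCycles g := by
  unfold numCycles; rw [Equiv.Perm.cycleType_inv]

lemma defect_inv (g : Perm (Fin N)) : defect g⁻¹ = defect g := by
  have h1 := numCycles_add_defect g
  have h2 := numCycles_add_defect g⁻¹
  rw [numCycles_inv] at h2; omega

lemma defect_eq_zero_iff {g : Perm (Fin N)} : defect g = 0 ↔ g = 1 := by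
  constructor
  · intro h
    have hbot : LinearMap.range (Dop g) = ⊥ := by
      have : FiniteDimensional ℚ (LinearMap.range (Dop g)) := inferInstance
      exact Submodule.finrank_eq_zero.1 h
    have hD : Dop g = 0 := LinearMap.range_eq_bot.1 hbot
    have hfix : ∀ f : Fin N → ℚ, ∀ x, f (g x) = f x := by
      intro f
      have : f ∈ ker (Dop g) := by rw [hD]; simp
      exact mem_ker_Dop.1 this
    have hgx : ∀ x, g x = x := by
      intro x
      have h1 := hfix (fun y => if y = g x then (1:ℚ) else 0) x
      simp only [if_pos rfl] at h1
      by_contra hne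
      rw [if_neg (fun hc : x = g x => hne hc.symm)] at h1
      norm_num at h1
    exact Equiv.ext fun x => (hgx x).trans (Equiv.Perm.one_apply x).symm
  · rintro rfl; exact defect_one

lemma defect_mul_le (g h : Perm (Fin N)) : defect (g * h) ≤ defect g + defect h := by
  classical
  have key : ∀ x, Dop (g * h) x = (Dop h) ((LinearMap.funLeft ℚ ℚ g) x) + Dop g x := by
    intro x
    show (x ∘ (g * h) - x) = ((x ∘ g) ∘ h - x ∘ g) + (x ∘ g - x)
    have : x ∘ ⇑(g * h) = (x ∘ g) ∘ h := by
      funext y; rfl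
    rw [this]; ring
  have hrange : LinearMap.range (Dop (g * h)) ≤
      LinearMap.range (Dop h) ⊔ LinearMap.range (Dop g) := by
    rintro y ⟨x, rfl⟩
    rw [key]
    exact Submodule.add_mem_sup ⟨_, rfl⟩ ⟨x, rfl⟩
  calc defect (g * h) ≤ finrank ℚ ((LinearMap.range (Dop h) ⊔ LinearMap.range (Dop g) : Submodule ℚ (Fin N → ℚ))) :=
        Submodule.finrank_mono hrange
    _ ≤ defect h + defect g := by
        have := Submodule.finrank_sup_add_finrank_inf_eq
          (LinearMap.range (Dop h)) (LinearMap.range (Dop g))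
        unfold defect; omega
    _ = defect g + defect h := Nat.add_comm _ _

lemma defect_eq_of_eq_one_mul {g h : Perm (Fin N)} : defect ((g)⁻¹ * h) = defect (h⁻¹ * g) := by
  have : h⁻¹ * g = (g⁻¹ * h)⁻¹ := by group
  rw [this, defect_inv]

end PermDefect2

section GraphHelpers

variable {V : Type*} {G : SimpleGraph V}

lemma walk_closed (P : V → Prop) :
    ∀ {x y : V} (w : G.Walk x y),
      (∀ u v, G.Adj u v → s(u,v) ∈ w.edges → P u → P v) → P x → P y := by
  intro x y w
  induction w with
  | nil => exact fun _ h => h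
  | cons h p ih =>
      intro hstep hx
      refine ih (fun u v ha he hu => hstep u v ha ?_ hu) (hstep _ _ h ?_ hx)
      · rw [SimpleGraph.Walk.edges_cons]; exact List.mem_cons_of_mem _ he
      · rw [SimpleGraph.Walk.edges_cons]; exact List.mem_cons_self

lemma walk_delete {s : Set (Sym2 V)} {a b : V} (w : (G.deleteEdges s).Walk a b) :
    ∃ w' : G.Walk a b, ∀ e ∈ w'.edges, e ∉ s := by
  induction w with
  | nil => exact ⟨SimpleGraph.Walk.nil, by simp⟩
  | cons h p ih =>
      obtain ⟨w', hw'⟩ := ih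
      rw [SimpleGraph.deleteEdges_adj] at h
      refine ⟨SimpleGraph.Walk.cons h.1 w', ?_⟩
      intro e he
      rw [SimpleGraph.Walk.edges_cons, List.mem_cons] at he
      rcases he with rfl | he
      · exact h.2
      · exact hw' e he

lemma exists_crossing_edge (f : V → ℕ) (t : ℕ) :
    ∀ {x y : V} (w : G.Walk x y), f x < t → t ≤ f y →
      ∃ u v, s(u,v) ∈ w.edges ∧ G.Adj u v ∧ f u < t ∧ t ≤ f v := by
  intro x y w
  induction w with
  | nil => intro h1 h2; omega
  | @cons x m y h p ih =>
      intro h1 h2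
      by_cases hm : t ≤ f m
      · exact ⟨x, m, by rw [SimpleGraph.Walk.edges_cons]; exact List.mem_cons_self, h, h1, hm⟩
      · obtain ⟨u, v, he, hadj, hu, hv⟩ := ih (by omega) h2
        exact ⟨u, v, by rw [SimpleGraph.Walk.edges_cons]; exact List.mem_cons_of_mem _ he,
          hadj, hu, hv⟩

end GraphHelpers

section Sym2Helpers

variable {N : ℕ} {V : Type*}

noncomputable def edef (π : V → Perm (Fin N)) : Sym2 V → ℕ :=
  Sym2.lift ⟨fun u v => defect ((π u)⁻¹ * π v), fun u v => defect_eq_of_eq_one_mul.symm⟩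

def emin (d : V → ℕ) : Sym2 V → ℕ :=
  Sym2.lift ⟨fun u v => min (d u) (d v), fun u v => min_comm _ _⟩

def emax (d : V → ℕ) : Sym2 V → ℕ :=
  Sym2.lift ⟨fun u v => max (d u) (d v), fun u v => max_comm _ _⟩

@[simp] lemma edef_mk (π : V → Perm (Fin N)) (u v : V) :
    edef π s(u,v) = defect ((π u)⁻¹ * π v) := rfl

@[simp] lemma emin_mk (d : V → ℕ) (u v : V) : emin d s(u,v) = min (d u) (d v) := rfl

@[simp] lemma emax_mk (d : V → ℕ) (u v : V) : emax d s(u,v) = max (d u) (d v) := rfl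

lemma ncl_add_edef (π : V → Perm (Fin N)) (e : Sym2 V) :
    numCyclesLift π e + edef π e = N := by
  induction e using Sym2.ind with
  | _ u v => exact numCycles_add_defect _

lemma emax_sub_emin_le_edef (π : V → Perm (Fin N)) (e : Sym2 V) :
    emax (fun v => defect (π v)) e - emin (fun v => defect (π v)) e ≤ edef π e := by
  induction e using Sym2.ind with
  | _ u v =>
      simp only [emax_mk, emin_mk, edef_mk]
      have h1 : defect (π v) ≤ defect (π u) + defect ((π u)⁻¹ * π v) := by
        have := defect_mul_le (π u) ((π u)⁻¹ * π v)
        rw [mul_inv_cancel_left] at this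
        exact this
      have h2 : defect (π u) ≤ defect (π v) + defect ((π u)⁻¹ * π v) := by
        have := defect_mul_le (π v) ((π v)⁻¹ * π u)
        rw [mul_inv_cancel_left, defect_eq_of_eq_one_mul] at this
        exact this
      omega

end Sym2Helpers

/-- if the minimum `A`–`B` edge cut `σ_min` of the connected graph
is unique, then the maximizer of the face number
`Ω̃({π_v}) = ∑_{(u,v)∈E} χ(π_u⁻¹π_v)` subject to the boundary conditions (`id`
on the `A` side, the `N`-cycle `F` on the `B` side) is unique, given by assigning
`id` and `F` to the two components of `Γ ∖ σ_min`: any other admissible labeling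
has strictly smaller face number. -/
theorem faceNumber_max_unique {V : Type*} [Fintype V] [DecidableEq V]
    (G : SimpleGraph V) [DecidableRel G.Adj] (hconn : G.Connected)
    (A B : Set V) (hdisj : Disjoint A B) (hA : A.Nonempty) (hB : B.Nonempty)
    (N : ℕ) (hN : 2 ≤ N) (F : Equiv.Perm (Fin N))
    (hF : F.IsCycle ∧ F.support = Finset.univ)
    (σmin : Finset (Sym2 V)) (hσ : IsMinEdgeCut G A B σmin)
    (huniq : ∀ σ' : Finset (Sym2 V), IsMinEdgeCut G A B σ' → σ' = σmin) :
    ∀ π : V → Equiv.Perm (Fin N),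
      (∀ v ∈ A, π v = 1) → (∀ v ∈ B, π v = F) →
      π ≠ cutLabel G σmin A F →
      ∑ e ∈ G.edgeFinset, numCyclesLift π e
        < ∑ e ∈ G.edgeFinset, numCyclesLift (cutLabel G σmin A F) e := by
  classical
  intro π hπA hπB hπne
  set G' := G.deleteEdges ↑σmin with hG'def
  set R : Set V := {v | ∃ a ∈ A, G'.Reachable a v} with hRdef
  set S : Set V := {v | ∃ b ∈ B, G'.Reachable b v} with hSdef
  -- basic facts about R and S
  have hRclosed : ∀ {x y : V}, x ∈ R → G'.Reachable x y → y ∈ R := by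
    rintro x y ⟨a, ha, hr⟩ hxy; exact ⟨a, ha, hr.trans hxy⟩
  have hSclosed : ∀ {x y : V}, x ∈ S → G'.Reachable x y → y ∈ S := by
    rintro x y ⟨b, hb, hr⟩ hxy; exact ⟨b, hb, hr.trans hxy⟩
  have hRS : ∀ v, v ∈ R → v ∈ S → False := by
    rintro v ⟨a, ha, hra⟩ ⟨b, hb, hrb⟩
    obtain ⟨w⟩ := hra.trans hrb.symm
    obtain ⟨w', hw'⟩ := walk_delete w
    obtain ⟨e, hew, hes⟩ := hσ.1.2 a ha b hb w'
    exact hw' e hew hes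
  have hAR : ∀ a ∈ A, a ∈ R := fun a ha => ⟨a, ha, SimpleGraph.Reachable.refl a⟩
  have hBS : ∀ b ∈ B, b ∈ S := fun b hb => ⟨b, hb, SimpleGraph.Reachable.refl b⟩
  have hBR : ∀ b ∈ B, b ∉ R := fun b hb hbR => hRS b hbR (hBS b hb)
  -- every minimum-cut edge goes from R to S
  have hcross : ∀ u v, s(u,v) ∈ σmin → (u ∈ R ∧ v ∈ S) ∨ (v ∈ R ∧ u ∈ S) := by
    intro u v he
    have hadj : G.Adj u v := (G.mem_edgeSet).1 (hσ.1.1 (Finset.mem_coe.2 he))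
    set σ' := σmin.erase s(u,v) with hσ'def
    have hsub' : ↑σ' ⊆ G.edgeSet := fun e' he' =>
      hσ.1.1 (Finset.mem_coe.2 (Finset.mem_of_mem_erase (Finset.mem_coe.1 he')))
    have hnotcut : ¬ IsEdgeCut G A B σ' := by
      intro hcut
      have h1 := hσ.2 σ' hcut
      have h2 : σ'.card < σmin.card := Finset.card_erase_lt_of_mem he
      omega
    rw [IsEdgeCut] at hnotcut
    push_neg at hnotcut
    obtain ⟨a, ha, b, hb, w, hw⟩ := hnotcut hsub'
    have hwE : ∀ e' ∈ w.edges, e' ∈ σmin → e' = s(u,v) := by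
      intro e' he'w he'm
      by_contra hne
      exact hw e' he'w (Finset.mem_erase.2 ⟨hne, he'm⟩)
    -- an endpoint is in R
    have hend : u ∈ R ∨ v ∈ R := by
      by_contra hno
      push_neg at hno
      have hbR : b ∈ R := by
        refine walk_closed (· ∈ R) w ?_ (hAR a ha)
        intro x y hxy hxye hxR
        by_cases hmem : s(x,y) ∈ σmin
        · have h := hwE _ hxye hmem
          rw [Sym2.eq_iff] at h
          rcases h with ⟨rfl, rfl⟩ | ⟨rfl, rfl⟩
          · exact absurd hxR hno.1
          · exact absurd hxR hno.2
        · exact hRclosed hxR ((SimpleGraph.deleteEdges_adj.2 ⟨hxy, hmem⟩).reachable)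
      exact hBR b hb hbR
    -- an endpoint is in S
    have hendS : u ∈ S ∨ v ∈ S := by
      have hT : b ∈ R ∨ G'.Reachable u b ∨ G'.Reachable v b := by
        refine walk_closed (fun z => z ∈ R ∨ G'.Reachable u z ∨ G'.Reachable v z) w ?_
          (Or.inl (hAR a ha))
        intro x y hxy hxye hx
        by_cases hmem : s(x,y) ∈ σmin
        · have h := hwE _ hxye hmem
          rw [Sym2.eq_iff] at h
          rcases h with ⟨rfl, rfl⟩ | ⟨rfl, rfl⟩
          · exact Or.inr (Or.inr (SimpleGraph.Reachable.refl _))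
          · exact Or.inr (Or.inl (SimpleGraph.Reachable.refl _))
        · have hadj' : G'.Reachable x y := (SimpleGraph.deleteEdges_adj.2 ⟨hxy, hmem⟩).reachable
          rcases hx with hx | hx | hx
          · exact Or.inl (hRclosed hx hadj')
          · exact Or.inr (Or.inl (hx.trans hadj'))
          · exact Or.inr (Or.inr (hx.trans hadj'))
      rcases hT with hT | hT | hT
      · exact absurd hT (hBR b hb)
      · exact Or.inl ⟨b, hb, hT.symm⟩
      · exact Or.inr ⟨b, hb, hT.symm⟩
    rcases hend with hu | hv
    · rcases hendS with hS | hS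
      · exact absurd hS (fun h => hRS u hu h)
      · exact Or.inl ⟨hu, hS⟩
    · rcases hendS with hS | hS
      · exact Or.inr ⟨hv, hS⟩
      · exact absurd hS (fun h => hRS v hv h)
  -- every vertex is in R or S
  have hRScover : ∀ v, v ∈ R ∨ v ∈ S := by
    intro v
    obtain ⟨a, ha⟩ := hA
    obtain ⟨w⟩ := hconn.preconnected a v
    refine walk_closed (fun z => z ∈ R ∨ z ∈ S) w ?_ (Or.inl (hAR a ha))
    intro x y hxy _ hx
    by_cases hmem : s(x,y) ∈ σmin
    · rcases hcross x y hmem with ⟨_, hyS⟩ | ⟨hyR, _⟩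
      · exact Or.inr hyS
      · exact Or.inl hyR
    · have hadj' : G'.Reachable x y := (SimpleGraph.deleteEdges_adj.2 ⟨hxy, hmem⟩).reachable
      rcases hx with hx | hx
      · exact Or.inl (hRclosed hx hadj')
      · exact Or.inr (hSclosed hx hadj')
  -- values of cutLabel
  have hlab1 : ∀ v ∈ R, cutLabel G σmin A F v = 1 := by
    intro v hv
    exact if_pos hv
  have hlab2 : ∀ v, v ∉ R → cutLabel G σmin A F v = F := by
    intro v hv
    exact if_neg hv
  -- numCycles of F
  have hNF : numCycles F = 1 := by
    unfold numCycles
    rw [hF.1.cycleType, hF.2, Finset.card_univ, Fintype.card_fin]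
    simp
  have hdF : defect F = N - 1 := by
    have h := numCycles_add_defect F
    rw [hNF] at h; omega
  have hsub : σmin ⊆ G.edgeFinset := fun e he =>
    SimpleGraph.mem_edgeFinset.2 (hσ.1.1 (Finset.mem_coe.2 he))
  have hk' : σmin.card ≤ G.edgeFinset.card := Finset.card_le_card hsub
  -- the face number of the cut labeling
  have hΩc : ∑ e ∈ G.edgeFinset, numCyclesLift (cutLabel G σmin A F) e
      = (G.edgeFinset.card - σmin.card) * N + σmin.card := by
    rw [← Finset.sum_sdiff hsub]
    have hout : ∀ e ∈ G.edgeFinset \ σmin, numCyclesLift (cutLabel G σmin A F) e = N := by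
      intro e he
      rw [Finset.mem_sdiff] at he
      revert he
      induction e using Sym2.ind with
      | _ u v =>
        intro he
        have hadj : G.Adj u v := (G.mem_edgeSet).1 (SimpleGraph.mem_edgeFinset.1 he.1)
        have hG'adj : G'.Adj u v := SimpleGraph.deleteEdges_adj.2 ⟨hadj, he.2⟩
        show numCycles ((cutLabel G σmin A F u)⁻¹ * cutLabel G σmin A F v) = N
        by_cases hu : u ∈ R
        · rw [hlab1 u hu, hlab1 v (hRclosed hu hG'adj.reachable)]
          simpa using numCycles_one
        · have hv : v ∉ R := fun hv => hu (hRclosed hv hG'adj.symm.reachable)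
          rw [hlab2 u hu, hlab2 v hv]
          simpa using numCycles_one
    have hin : ∀ e ∈ σmin, numCyclesLift (cutLabel G σmin A F) e = 1 := by
      intro e he
      revert he
      induction e using Sym2.ind with
      | _ u v =>
        intro he
        show numCycles ((cutLabel G σmin A F u)⁻¹ * cutLabel G σmin A F v) = 1
        rcases hcross u v he with ⟨hu, hvS⟩ | ⟨hvR, huS⟩
        · rw [hlab1 u hu, hlab2 v (fun h => hRS v h hvS)]
          simpa using hNF
        · rw [hlab2 u (fun h => hRS u h huS), hlab1 v hvR]
          rw [mul_one, numCycles_inv]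
          exact hNF
    rw [Finset.sum_congr rfl hout, Finset.sum_congr rfl hin, Finset.sum_const,
      Finset.sum_const, Finset.card_sdiff_of_subset hsub, smul_eq_mul, smul_eq_mul, mul_one]
  -- the level function
  set d : V → ℕ := fun v => defect (π v) with hd
  have hdle : ∀ v, d v ≤ N - 1 := fun v => defect_le (by omega) _
  set σt : ℕ → Finset (Sym2 V) :=
    fun t => G.edgeFinset.filter (fun e => emin d e < t ∧ t ≤ emax d e) with hσt
  have hcutt : ∀ t, 1 ≤ t → t ≤ N - 1 → IsEdgeCut G A B (σt t) := by
    intro t ht1 ht2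
    constructor
    · intro e he
      exact SimpleGraph.mem_edgeFinset.1
        ((Finset.mem_filter.1 (Finset.mem_coe.1 he)).1)
    · intro a ha b hb w
      have hda : d a = 0 := by simp only [hd, hπA a ha]; exact defect_one
      have hdb : d b = N - 1 := by simp only [hd, hπB b hb]; exact hdF
      obtain ⟨u, v, hew, hadj, hu, hv⟩ :=
        exists_crossing_edge d t w (by omega) (by omega)
      refine ⟨s(u,v), hew, Finset.mem_filter.2 ⟨SimpleGraph.mem_edgeFinset.2
        ((G.mem_edgeSet).2 hadj), ?_⟩⟩
      simp only [emin_mk, emax_mk]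
      omega
  -- coarea formula
  have hco : ∑ t ∈ Finset.Icc 1 (N-1), (σt t).card
      = ∑ e ∈ G.edgeFinset, (emax d e - emin d e) := by
    have h1 : ∀ t, (σt t).card
        = ∑ e ∈ G.edgeFinset, if emin d e < t ∧ t ≤ emax d e then 1 else 0 :=
      fun t => Finset.card_filter _ _
    rw [Finset.sum_congr rfl (fun t _ => h1 t), Finset.sum_comm]
    refine Finset.sum_congr rfl (fun e _ => ?_)
    have hmx : emax d e ≤ N - 1 := by
      induction e using Sym2.ind with
      | _ u v => simp only [emax_mk]; exact max_le (hdle u) (hdle v)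
    have hmn : emin d e ≤ emax d e := by
      induction e using Sym2.ind with
      | _ u v => simp only [emin_mk, emax_mk]; omega
    have h2 : (∑ t ∈ Finset.Icc 1 (N-1), if emin d e < t ∧ t ≤ emax d e then 1 else 0)
        = ((Finset.Icc 1 (N-1)).filter (fun t => emin d e < t ∧ t ≤ emax d e)).card :=
      (Finset.card_filter _ _).symm
    rw [h2]
    have h3 : (Finset.Icc 1 (N-1)).filter (fun t => emin d e < t ∧ t ≤ emax d e)
        = Finset.Ioc (emin d e) (emax d e) := by
      ext t
      simp only [Finset.mem_filter, Finset.mem_Icc, Finset.mem_Ioc]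
      omega
    rw [h3, Nat.card_Ioc]
  have hlow : ∀ t ∈ Finset.Icc 1 (N-1), σmin.card ≤ (σt t).card := by
    intro t ht
    rw [Finset.mem_Icc] at ht
    exact hσ.2 _ (hcutt t ht.1 ht.2)
  set Sdef := ∑ e ∈ G.edgeFinset, edef π e with hSdefeq
  have hge1 : ∑ e ∈ G.edgeFinset, (emax d e - emin d e) ≤ Sdef :=
    Finset.sum_le_sum (fun e _ => emax_sub_emin_le_edef π e)
  have hge2 : (N-1) * σmin.card ≤ ∑ t ∈ Finset.Icc 1 (N-1), (σt t).card := by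
    have hs := Finset.sum_le_sum hlow
    rw [Finset.sum_const, Nat.card_Icc, smul_eq_mul] at hs
    have hc : N - 1 + 1 - 1 = N - 1 := by omega
    rw [hc] at hs
    exact hs
  -- strict inequality on the total defect
  have hstrict : (N-1) * σmin.card < Sdef := by
    rcases Nat.lt_or_ge ((N-1) * σmin.card) Sdef with h | h
    · exact h
    · exfalso
      have hall : Sdef = (N-1) * σmin.card :=
        le_antisymm h (le_trans hge2 (le_trans hco.le hge1))
      have hX : ∑ t ∈ Finset.Icc 1 (N-1), (σt t).card = (N-1) * σmin.card := by
        have h1 : ∑ t ∈ Finset.Icc 1 (N-1), (σt t).card ≤ Sdef := le_trans hco.le hge1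
        omega
      have hedge_eq : ∀ e ∈ G.edgeFinset, emax d e - emin d e = edef π e := by
        rw [← Finset.sum_eq_sum_iff_of_le (fun e _ => emax_sub_emin_le_edef π e)]
        rw [← hco, hX, ← hSdefeq, hall]
      have hcard_eq : ∀ t ∈ Finset.Icc 1 (N-1), σmin.card = (σt t).card := by
        rw [← Finset.sum_eq_sum_iff_of_le hlow]
        rw [hX, Finset.sum_const, Nat.card_Icc, smul_eq_mul]
        have hc : N - 1 + 1 - 1 = N - 1 := by omega
        rw [hc]
      have hσteq : ∀ t, 1 ≤ t → t ≤ N - 1 → σt t = σmin := by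
        intro t ht1 ht2
        refine huniq _ ⟨hcutt t ht1 ht2, ?_⟩
        intro σ'' hc
        rw [← hcard_eq t (Finset.mem_Icc.2 ⟨ht1, ht2⟩)]
        exact hσ.2 σ'' hc
      have hflat : ∀ u v, G.Adj u v → s(u,v) ∉ σmin → π u = π v := by
        intro u v hadj hmem
        have he : s(u,v) ∈ G.edgeFinset :=
          SimpleGraph.mem_edgeFinset.2 ((G.mem_edgeSet).2 hadj)
        have hdd : d u = d v := by
          by_contra hne
          have ht1 : 1 ≤ min (d u) (d v) + 1 := by omega
          have ht2 : min (d u) (d v) + 1 ≤ N - 1 := by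
            have h1 := hdle u
            have h2 := hdle v
            omega
          have hmm : s(u,v) ∈ σt (min (d u) (d v) + 1) := by
            refine Finset.mem_filter.2 ⟨he, ?_⟩
            simp only [emin_mk, emax_mk]
            omega
          rw [hσteq _ ht1 ht2] at hmm
          exact hmem hmm
        have hz : edef π s(u,v) = 0 := by
          rw [← hedge_eq _ he]
          simp only [emin_mk, emax_mk]
          omega
        rw [edef_mk] at hz
        exact inv_mul_eq_one.1 (defect_eq_zero_iff.1 hz)
      have hconst : ∀ x y : V, G'.Reachable x y → π x = π y := by
        intro x y hxy
        obtain ⟨w⟩ := hxy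
        obtain ⟨w', hw'⟩ := walk_delete w
        exact walk_closed (fun z => π x = π z) w'
          (fun u v ha hein hz => hz.trans (hflat u v ha (hw' _ hein))) rfl
      have hfin : π = cutLabel G σmin A F := by
        funext v
        rcases hRScover v with hv | hv
        · obtain ⟨a, ha, hr⟩ := hv
          have h1 := hconst a v hr
          rw [hπA a ha] at h1
          rw [hlab1 v ⟨a, ha, hr⟩]
          exact h1.symm
        · have hvR : v ∉ R := fun hmem => hRS v hmem hv
          obtain ⟨b, hb, hr⟩ := hv
          have h1 := hconst b v hr
          rw [hπB b hb] at h1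
          rw [hlab2 v hvR]
          exact h1.symm
      exact hπne hfin
  -- total identity for π
  have hΩπ : (∑ e ∈ G.edgeFinset, numCyclesLift π e) + Sdef = N * G.edgeFinset.card := by
    rw [hSdefeq, ← Finset.sum_add_distrib]
    rw [Finset.sum_congr rfl (fun e _ => ncl_add_edef π e), Finset.sum_const, smul_eq_mul,
      mul_comm]
  -- final arithmetic
  rw [hΩc]
  have hsplit : N * G.edgeFinset.card
      = (G.edgeFinset.card - σmin.card) * N + σmin.card + (N-1) * σmin.card := by
    have h1 : (G.edgeFinset.card - σmin.card) * N + σmin.card * N = G.edgeFinset.card * N := by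
      rw [← Nat.add_mul, Nat.sub_add_cancel hk']
    have h2 : σmin.card * N = σmin.card + (N-1) * σmin.card := by
      have h3 : N = 1 + (N - 1) := by omega
      calc σmin.card * N = σmin.card * (1 + (N-1)) := by rw [← h3]
        _ = σmin.card + (N-1) * σmin.card := by ring
    rw [Nat.mul_comm N _, ← h1, h2]
    ring
  rw [hsplit] at hΩπ
  generalize hXg : (G.edgeFinset.card - σmin.card) * N = X at hΩπ ⊢
  generalize hYg : (N-1) * σmin.card = Y at hΩπ hstrict
  omega
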